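/- Define f(z_1, z_2, w) = (z_2^{-1}/(1-z_2^{-1}w_∓) + w^{-1}/(1-w^{-1}(z_2)_∓)) · (w^{-1}(z_2-z_1)(z_2-z_1±ℏ)/(1-w^{-1}(z_1)_∓) + z_1^{-1}(z_1-z_2)(z_1-z_2±ℏ)/(1-z_1^{-1}w_∓)), where a_± = a ± ℏ/2 and each geometric series x^{-1}/(1-x^{-1}y) is expanded as Σ_{k≥0} y^k x^{-k-1}. Then f(z_1,z_2,w) + f(z_2,z_1,w) = 0 as formal series. -/
import Mathlib


/- We model formal distributions in `ℂ[[ℏ]][[z₁^{±1}, z₂^{±1}, w^{±1}]]` by coefficient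
functions `ℤ → ℤ → ℤ → ℤ → ℂ`, recording the coefficient of `z₁^a z₂^b w^c ℏ^m`.
The sign `± = e ∈ {1,-1}`, so `x∓ = x - eℏ/2` and `±ℏ = eℏ`. -/

/-- Coefficient of `x^a y^c ℏ^μ` in `x^{-1}/(1-x^{-1}y∓) = Σ_{k≥0} (y - eℏ/2)^k x^{-k-1}`. -/
noncomputable def geomHalf (e : ℤ) (a c μ : ℤ) : ℂ :=
  if a ≤ -1 ∧ 0 ≤ μ ∧ c = -a - 1 - μ then
    (((-a - 1).toNat.choose μ.toNat : ℤ) : ℂ) * (-(e : ℂ) / 2) ^ μ.toNat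
  else 0

/-- `z₂^{-1}/(1-z₂^{-1}w∓)` (coefficient of `z₁^a z₂^b w^c ℏ^m`). -/
noncomputable def S1 (e : ℤ) : ℤ → ℤ → ℤ → ℤ → ℂ := fun a b c m =>
  if a = 0 then geomHalf e b c m else 0

/-- `w^{-1}/(1-w^{-1}(z₂)∓)`. -/
noncomputable def S2 (e : ℤ) : ℤ → ℤ → ℤ → ℤ → ℂ := fun a b c m =>
  if a = 0 then geomHalf e c b m else 0

/-- `w^{-1}(z₂-z₁)(z₂-z₁±ℏ)/(1-w^{-1}(z₁)∓)
   = (z₂-z₁)(z₂-z₁+eℏ)·Σ_{k≥0}(z₁ - eℏ/2)^k w^{-k-1}`. -/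
noncomputable def S3 (e : ℤ) : ℤ → ℤ → ℤ → ℤ → ℂ := fun a b c m =>
  (if b = 2 then geomHalf e c a m else 0)
  + (if b = 1 then (-2 : ℂ) * geomHalf e c (a - 1) m else 0)
  + (if b = 0 then geomHalf e c (a - 2) m else 0)
  + (if b = 1 then (e : ℂ) * geomHalf e c a (m - 1) else 0)
  + (if b = 0 then (-(e : ℂ)) * geomHalf e c (a - 1) (m - 1) else 0)

/-- `z₁^{-1}(z₁-z₂)(z₁-z₂±ℏ)/(1-z₁^{-1}w∓)
   = (z₁-z₂)(z₁-z₂+eℏ)·Σ_{k≥0}(w - eℏ/2)^k z₁^{-k-1}`. -/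
noncomputable def S4 (e : ℤ) : ℤ → ℤ → ℤ → ℤ → ℂ := fun a b c m =>
  (if b = 0 then geomHalf e (a - 2) c m else 0)
  + (if b = 1 then (-2 : ℂ) * geomHalf e (a - 1) c m else 0)
  + (if b = 2 then geomHalf e a c m else 0)
  + (if b = 0 then (e : ℂ) * geomHalf e (a - 1) c (m - 1) else 0)
  + (if b = 1 then (-(e : ℂ)) * geomHalf e a c (m - 1) else 0)

/-- Product (convolution) of two formal distributions in `z₁, z₂, w, ℏ`. -/
noncomputable def conv4 (F G : ℤ → ℤ → ℤ → ℤ → ℂ) : ℤ → ℤ → ℤ → ℤ → ℂ :=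
  fun a b c m => ∑ᶠ p : ℤ × ℤ × ℤ × ℤ,
    F p.1 p.2.1 p.2.2.1 p.2.2.2 * G (a - p.1) (b - p.2.1) (c - p.2.2.1) (m - p.2.2.2)

/-- The distribution
`f(z₁,z₂,w) = (z₂^{-1}/(1-z₂^{-1}w∓) + w^{-1}/(1-w^{-1}(z₂)∓)) ·
  (w^{-1}(z₂-z₁)(z₂-z₁±ℏ)/(1-w^{-1}(z₁)∓) + z₁^{-1}(z₁-z₂)(z₁-z₂±ℏ)/(1-z₁^{-1}w∓))`. -/
noncomputable def fDist (e : ℤ) : ℤ → ℤ → ℤ → ℤ → ℂ :=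
  conv4 (fun a b c m => S1 e a b c m + S2 e a b c m)
        (fun a b c m => S3 e a b c m + S4 e a b c m)

lemma gh_rel (e : ℤ) (b c m : ℤ) :
    geomHalf e (b-1) c m - geomHalf e b (c-1) m + ((e:ℂ)/2) * geomHalf e b c (m-1)
      = if b = 0 ∧ c = 0 ∧ m = 0 then 1 else 0 := by
  unfold geomHalf
  split_ifs with h1 h2 h3 h4 h2 h3' h3 h4 h3 h4
  all_goals try (exfalso; omega)
  · -- Pascal case
    have hA : (-(b - 1) - 1).toNat = (-b - 1).toNat + 1 := by omega
    have hB : m.toNat = (m - 1).toNat + 1 := by omega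
    rw [hA, hB, Nat.choose_succ_succ]
    push_cast
    ring
  · -- m = 0 case
    have hm0 : m.toNat = 0 := by omega
    rw [hm0]
    simp [Nat.choose_zero_right]
  · -- delta case
    obtain ⟨rfl, rfl, rfl⟩ := h4
    norm_num
  · -- b = 0, m ≥ 1 case
    have h0 : (-(b - 1) - 1).toNat = 0 := by omega
    rw [h0, Nat.choose_eq_zero_of_lt (by omega : 0 < m.toNat)]
    simp
  · ring

namespace St14

abbrev D := ℤ → ℤ → ℤ → ℤ → ℂ
abbrev V := ℤ × ℤ × ℤ × ℤ

noncomputable def shv (v : V) (F : D) : D :=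
  fun a b c m => F (a - v.1) (b - v.2.1) (c - v.2.2.1) (m - v.2.2.2)

def vz1 : V := (1,0,0,0)
def vz2 : V := (0,1,0,0)
def vw  : V := (0,0,1,0)
def vh  : V := (0,0,0,1)

/-- multiplication operator by the linear form `u - v + (e/2)ℏ`. -/
noncomputable def gop (e : ℤ) (u v : V) (F : D) : D :=
  shv u F - shv v F + ((e : ℂ)/2) • shv vh F

noncomputable def one4 : D := fun a b c m => if a = 0 ∧ b = 0 ∧ c = 0 ∧ m = 0 then 1 else 0

def okF (d1 d2 : ℤ) (F : D) : Prop :=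
  ∀ p q r t : ℤ, F p q r t ≠ 0 → p = 0 ∧ 0 ≤ t ∧ d1 ≤ p + q + r + t ∧ p + q + r + t ≤ d2

def okG (lo hi : ℤ) (G : D) : Prop :=
  ∀ p q r t : ℤ, G p q r t ≠ 0 → lo ≤ q ∧ q ≤ hi ∧ 0 ≤ t

lemma fin_supp {F G : D} {d1 d2 lo hi : ℤ} (hF : okF d1 d2 F) (hG : okG lo hi G)
    (a b c m : ℤ) :
    (Function.support fun p : V =>
      F p.1 p.2.1 p.2.2.1 p.2.2.2 * G (a - p.1) (b - p.2.1) (c - p.2.2.1) (m - p.2.2.2)).Finite := by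
  apply Set.Finite.subset
    (Set.finite_Icc ((0 : ℤ), b - hi, d1 - (b - lo) - m, (0 : ℤ)) (0, b - lo, d2 - (b - hi), m))
  rintro ⟨p, q, r, t⟩ hp
  simp only [Function.mem_support] at hp
  obtain ⟨e1, e2, e3, e4⟩ := hF p q r t (left_ne_zero_of_mul hp)
  obtain ⟨f1, f2, f3⟩ := hG _ _ _ _ (right_ne_zero_of_mul hp)
  simp only [Set.mem_Icc, Prod.mk_le_mk]
  omega

-- basic conv4 lemmas
lemma conv4_add_right {F G G' : D} {d1 d2 lo hi lo' hi' : ℤ}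
    (hF : okF d1 d2 F) (hG : okG lo hi G) (hG' : okG lo' hi' G') :
    conv4 F (G + G') = conv4 F G + conv4 F G' := by
  funext a b c m
  simp only [conv4, Pi.add_apply, mul_add]
  exact finsum_add_distrib (fin_supp hF hG a b c m) (fin_supp hF hG' a b c m)

lemma conv4_sub_right {F G G' : D} {d1 d2 lo hi lo' hi' : ℤ}
    (hF : okF d1 d2 F) (hG : okG lo hi G) (hG' : okG lo' hi' G') :
    conv4 F (G - G') = conv4 F G - conv4 F G' := by
  funext a b c m
  simp only [conv4, Pi.sub_apply, mul_sub]
  exact finsum_sub_distrib (fin_supp hF hG a b c m) (fin_supp hF hG' a b c m)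

lemma conv4_add_left {F F' G : D} {d1 d2 e1 e2 lo hi : ℤ}
    (hF : okF d1 d2 F) (hF' : okF e1 e2 F') (hG : okG lo hi G) :
    conv4 (F + F') G = conv4 F G + conv4 F' G := by
  funext a b c m
  simp only [conv4, Pi.add_apply, add_mul]
  exact finsum_add_distrib (fin_supp hF hG a b c m) (fin_supp hF' hG a b c m)

lemma conv4_sub_left {F F' G : D} {d1 d2 e1 e2 lo hi : ℤ}
    (hF : okF d1 d2 F) (hF' : okF e1 e2 F') (hG : okG lo hi G) :
    conv4 (F - F') G = conv4 F G - conv4 F' G := by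
  funext a b c m
  simp only [conv4, Pi.sub_apply, sub_mul]
  exact finsum_sub_distrib (fin_supp hF hG a b c m) (fin_supp hF' hG a b c m)

lemma conv4_smul_right (r : ℂ) (F G : D) : conv4 F (r • G) = r • conv4 F G := by
  funext a b c m
  simp only [conv4, Pi.smul_apply, smul_eq_mul]
  rw [← smul_eq_mul, smul_finsum]
  exact finsum_congr fun p => by simp [smul_eq_mul]; ring

lemma conv4_smul_left (r : ℂ) (F G : D) : conv4 (r • F) G = r • conv4 F G := by
  funext a b c m
  simp only [conv4, Pi.smul_apply, smul_eq_mul]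
  rw [← smul_eq_mul, smul_finsum]
  exact finsum_congr fun p => by simp [smul_eq_mul]; ring

lemma conv4_shv_right (v : V) (F G : D) : conv4 F (shv v G) = shv v (conv4 F G) := by
  funext a b c m
  simp only [conv4, shv]
  refine finsum_congr fun p => ?_
  rw [show a - p.1 - v.1 = a - v.1 - p.1 by ring, show b - p.2.1 - v.2.1 = b - v.2.1 - p.2.1 by ring,
    show c - p.2.2.1 - v.2.2.1 = c - v.2.2.1 - p.2.2.1 by ring,
    show m - p.2.2.2 - v.2.2.2 = m - v.2.2.2 - p.2.2.2 by ring]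

lemma conv4_shv_left (v : V) (F G : D) : conv4 (shv v F) G = shv v (conv4 F G) := by
  funext a b c m
  simp only [conv4, shv]
  rw [← finsum_comp_equiv (Equiv.addRight v)]
  refine finsum_congr fun p => ?_
  obtain ⟨p1, p2, p3, p4⟩ := p
  obtain ⟨v1, v2, v3, v4⟩ := v
  simp only [Equiv.coe_addRight, Prod.mk_add_mk]
  rw [show p1 + v1 - v1 = p1 by ring, show p2 + v2 - v2 = p2 by ring,
    show p3 + v3 - v3 = p3 by ring, show p4 + v4 - v4 = p4 by ring,
    show a - (p1 + v1) = a - v1 - p1 by ring, show b - (p2 + v2) = b - v2 - p2 by ring,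
    show c - (p3 + v3) = c - v3 - p3 by ring, show m - (p4 + v4) = m - v4 - p4 by ring]

lemma conv4_one_right (F : D) : conv4 F one4 = F := by
  funext a b c m
  simp only [conv4]
  rw [finsum_eq_single _ ((a, b, c, m) : V)]
  · simp [one4]
  · rintro ⟨p, q, r, t⟩ hne
    have h : ¬(a - p = 0 ∧ b - q = 0 ∧ c - r = 0 ∧ m - t = 0) := by
      intro h
      exact hne (by simp only [Prod.mk.injEq]; omega)
    simp [one4, h]

lemma conv4_one_left (G : D) : conv4 one4 G = G := by
  funext a b c m
  simp only [conv4]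
  rw [finsum_eq_single _ ((0, 0, 0, 0) : V)]
  · simp [one4]
  · rintro ⟨p, q, r, t⟩ hne
    have h : ¬(p = 0 ∧ q = 0 ∧ r = 0 ∧ t = 0) := by
      intro h
      exact hne (by simp only [Prod.mk.injEq]; omega)
    simp [one4, h]


-- ok-predicate certificates
lemma geomHalf_ne {e x y μ : ℤ} (h : geomHalf e x y μ ≠ 0) :
    x ≤ -1 ∧ 0 ≤ μ ∧ y = -x - 1 - μ := by
  by_contra hc
  exact h (by unfold geomHalf; rw [if_neg hc])

lemma okG_mono {lo hi lo' hi' : ℤ} {G : D} (h : okG lo hi G)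
    (h1 : lo' ≤ lo) (h2 : hi ≤ hi') : okG lo' hi' G := by
  intro p q r t hne
  obtain ⟨a1, a2, a3⟩ := h p q r t hne
  omega

lemma okG_add {lo hi : ℤ} {G G' : D} (h : okG lo hi G) (h' : okG lo hi G') :
    okG lo hi (G + G') := by
  intro p q r t hne
  simp only [Pi.add_apply] at hne
  by_cases hg : G p q r t = 0
  · exact h' p q r t (by intro h0; exact hne (by rw [hg, h0, add_zero]))
  · exact h p q r t hg

lemma okG_sub {lo hi : ℤ} {G G' : D} (h : okG lo hi G) (h' : okG lo hi G') :
    okG lo hi (G - G') := by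
  intro p q r t hne
  simp only [Pi.sub_apply] at hne
  by_cases hg : G p q r t = 0
  · exact h' p q r t (by intro h0; exact hne (by rw [hg, h0, sub_zero]))
  · exact h p q r t hg

lemma okG_smul {lo hi : ℤ} {G : D} (r : ℂ) (h : okG lo hi G) : okG lo hi (r • G) := by
  intro p q r' t hne
  simp only [Pi.smul_apply, smul_eq_mul] at hne
  exact h p q r' t (right_ne_zero_of_mul hne)

lemma okG_shv {lo hi : ℤ} {G : D} (v : V) (h : okG lo hi G) (hv : 0 ≤ v.2.2.2) :
    okG (lo + v.2.1) (hi + v.2.1) (shv v G) := by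
  intro p q r t hne
  obtain ⟨a1, a2, a3⟩ := h _ _ _ _ hne
  omega

lemma okG_gop {lo hi lo' hi' : ℤ} {G : D} (e : ℤ) (u v : V) (h : okG lo hi G)
    (hu : 0 ≤ u.2.2.2) (hv : 0 ≤ v.2.2.2)
    (b1 : lo' ≤ lo + u.2.1) (b2 : lo' ≤ lo + v.2.1) (b3 : lo' ≤ lo)
    (b4 : hi + u.2.1 ≤ hi') (b5 : hi + v.2.1 ≤ hi') (b6 : hi ≤ hi') :
    okG lo' hi' (gop e u v G) := by
  intro p q r t hne
  simp only [gop, Pi.add_apply, Pi.sub_apply, Pi.smul_apply, smul_eq_mul, shv] at hne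
  have key : G (p - u.1) (q - u.2.1) (r - u.2.2.1) (t - u.2.2.2) ≠ 0 ∨
      G (p - v.1) (q - v.2.1) (r - v.2.2.1) (t - v.2.2.2) ≠ 0 ∨
      G (p - vh.1) (q - vh.2.1) (r - vh.2.2.1) (t - vh.2.2.2) ≠ 0 := by
    by_contra hc
    push_neg at hc
    rw [hc.1, hc.2.1, hc.2.2] at hne
    simp at hne
  have hvh : vh.2.1 = 0 ∧ vh.2.2.2 = 1 := by constructor <;> rfl
  rcases key with k | k | k <;> obtain ⟨a1, a2, a3⟩ := h _ _ _ _ k <;> omega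

lemma okF_shv {d1 d2 : ℤ} {F : D} (v : V) (h : okF d1 d2 F) (hv1 : v.1 = 0)
    (hv4 : 0 ≤ v.2.2.2) :
    okF (d1 + (v.1 + v.2.1 + v.2.2.1 + v.2.2.2)) (d2 + (v.1 + v.2.1 + v.2.2.1 + v.2.2.2))
      (shv v F) := by
  intro p q r t hne
  obtain ⟨a1, a2, a3, a4⟩ := h _ _ _ _ hne
  omega

lemma okF_add {d1 d2 : ℤ} {F F' : D} (h : okF d1 d2 F) (h' : okF d1 d2 F') :
    okF d1 d2 (F + F') := by
  intro p q r t hne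
  simp only [Pi.add_apply] at hne
  by_cases hg : F p q r t = 0
  · exact h' p q r t (by intro h0; exact hne (by rw [hg, h0, add_zero]))
  · exact h p q r t hg


lemma okF_mono {d1 d2 d1' d2' : ℤ} {F : D} (h : okF d1 d2 F)
    (h1 : d1' ≤ d1) (h2 : d2 ≤ d2') : okF d1' d2' F := by
  intro p q r t hne
  obtain ⟨a1, a2, a3, a4⟩ := h p q r t hne
  omega

lemma okF_smul {d1 d2 : ℤ} {F : D} (r : ℂ) (h : okF d1 d2 F) : okF d1 d2 (r • F) := by
  intro p q r' t hne
  simp only [Pi.smul_apply, smul_eq_mul] at hne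
  exact h p q r' t (right_ne_zero_of_mul hne)

lemma okF_sub {d1 d2 : ℤ} {F F' : D} (h : okF d1 d2 F) (h' : okF d1 d2 F') :
    okF d1 d2 (F - F') := by
  intro p q r t hne
  simp only [Pi.sub_apply] at hne
  by_cases hg : F p q r t = 0
  · exact h' p q r t (by intro h0; exact hne (by rw [hg, h0, sub_zero]))
  · exact h p q r t hg

lemma conv4_gop_right {d1 d2 lo hi : ℤ} {F G : D} (e : ℤ) (u v : V)
    (hF : okF d1 d2 F) (hG : okG lo hi G) (hu : 0 ≤ u.2.2.2) (hv : 0 ≤ v.2.2.2) :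
    conv4 F (gop e u v G) = gop e u v (conv4 F G) := by
  unfold gop
  have hu' : okG (lo + min u.2.1 v.2.1) (hi + max u.2.1 v.2.1) (shv u G) :=
    okG_mono (okG_shv u hG hu) (by omega) (by omega)
  have hv' : okG (lo + min u.2.1 v.2.1) (hi + max u.2.1 v.2.1) (shv v G) :=
    okG_mono (okG_shv v hG hv) (by omega) (by omega)
  rw [conv4_add_right hF (okG_sub hu' hv') (okG_smul _ (okG_shv vh hG (by norm_num [vh]))),
    conv4_sub_right hF hu' hv',
    conv4_smul_right, conv4_shv_right, conv4_shv_right, conv4_shv_right]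

lemma conv4_gop_left {d1 d2 lo hi : ℤ} {F G : D} (e : ℤ) (u v : V)
    (hF : okF d1 d2 F) (hG : okG lo hi G) (hu1 : u.1 = 0) (hv1 : v.1 = 0)
    (hu : 0 ≤ u.2.2.2) (hv : 0 ≤ v.2.2.2) :
    conv4 (gop e u v F) G = gop e u v (conv4 F G) := by
  unfold gop
  have hu' : okF (d1 + min (u.1 + u.2.1 + u.2.2.1 + u.2.2.2) (v.1 + v.2.1 + v.2.2.1 + v.2.2.2))
      (d2 + max (u.1 + u.2.1 + u.2.2.1 + u.2.2.2) (v.1 + v.2.1 + v.2.2.1 + v.2.2.2))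
      (shv u F) := okF_mono (okF_shv u hF hu1 hu) (by omega) (by omega)
  have hv' : okF (d1 + min (u.1 + u.2.1 + u.2.2.1 + u.2.2.2) (v.1 + v.2.1 + v.2.2.1 + v.2.2.2))
      (d2 + max (u.1 + u.2.1 + u.2.2.1 + u.2.2.2) (v.1 + v.2.1 + v.2.2.1 + v.2.2.2))
      (shv v F) := okF_mono (okF_shv v hF hv1 hv) (by omega) (by omega)
  have hh' : okF (d1 + 1) (d2 + 1) (shv vh F) := by
    have := okF_shv vh hF (by norm_num [vh]) (by norm_num [vh])
    exact okF_mono this (by norm_num [vh]) (by norm_num [vh])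
  rw [conv4_add_left (okF_sub hu' hv') (okF_smul _ hh') hG,
    conv4_sub_left hu' hv' hG, conv4_smul_left, conv4_shv_left, conv4_shv_left, conv4_shv_left]

lemma conv4_gop_cross {d1 d2 lo hi : ℤ} {F G : D} (e : ℤ) (u v : V)
    (hF : okF d1 d2 F) (hG : okG lo hi G) (hu1 : u.1 = 0) (hv1 : v.1 = 0)
    (hu : 0 ≤ u.2.2.2) (hv : 0 ≤ v.2.2.2) :
    conv4 F (gop e u v G) = conv4 (gop e u v F) G :=
  (conv4_gop_right e u v hF hG hu hv).trans (conv4_gop_left e u v hF hG hu1 hv1 hu hv).symm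

end St14

namespace St14

noncomputable def E1 (e : ℤ) : D := fun a b c m => if b = 0 then geomHalf e c a m else 0
noncomputable def E2 (e : ℤ) : D := fun a b c m => if b = 0 then geomHalf e a c m else 0

-- the four "annihilation" relations
lemma relA (e : ℤ) : gop e vz2 vw (S1 e) = one4 := by
  funext a b c m
  simp only [gop, shv, Pi.add_apply, Pi.sub_apply, Pi.smul_apply, smul_eq_mul, S1, one4,
    vz1, vz2, vw, vh]
  by_cases ha : a = 0
  · simp only [sub_zero, ha, if_true, if_pos rfl]
    rw [gh_rel e b c m]
    simp
  · simp [ha, sub_eq_zero]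


lemma relA' (e : ℤ) : gop e vw vz2 (S2 e) = one4 := by
  funext a b c m
  simp only [gop, shv, Pi.add_apply, Pi.sub_apply, Pi.smul_apply, smul_eq_mul, S2, one4,
    vz1, vz2, vw, vh, sub_zero]
  by_cases ha : a = 0
  · simp only [ha, if_true, if_pos rfl]
    rw [gh_rel e c b m]
    split_ifs <;> first | rfl | tauto
  · simp [ha]

lemma relB (e : ℤ) : gop e vw vz1 (E1 e) = one4 := by
  funext a b c m
  simp only [gop, shv, Pi.add_apply, Pi.sub_apply, Pi.smul_apply, smul_eq_mul, E1, one4,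
    vz1, vz2, vw, vh, sub_zero]
  by_cases hb : b = 0
  · simp only [hb, if_true, if_pos rfl]
    rw [gh_rel e c a m]
    split_ifs <;> first | rfl | tauto
  · simp [hb]

lemma relB' (e : ℤ) : gop e vz1 vw (E2 e) = one4 := by
  funext a b c m
  simp only [gop, shv, Pi.add_apply, Pi.sub_apply, Pi.smul_apply, smul_eq_mul, E2, one4,
    vz1, vz2, vw, vh, sub_zero]
  by_cases hb : b = 0
  · simp only [hb, if_true, if_pos rfl]
    rw [gh_rel e a c m]
    split_ifs <;> first | rfl | tauto
  · simp [hb]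

lemma S3_eq (e : ℤ) : S3 e =
    shv (0,2,0,0) (E1 e) - (2:ℂ) • shv (1,1,0,0) (E1 e) + shv (2,0,0,0) (E1 e)
      + (e:ℂ) • shv (0,1,0,1) (E1 e) - (e:ℂ) • shv (1,0,0,1) (E1 e) := by
  funext a b c m
  simp only [S3, E1, shv, Pi.add_apply, Pi.sub_apply, Pi.smul_apply, smul_eq_mul, sub_zero,
    sub_eq_zero]
  split_ifs <;> first | ring | (exfalso; omega)

lemma S4_eq (e : ℤ) : S4 e =
    shv (2,0,0,0) (E2 e) - (2:ℂ) • shv (1,1,0,0) (E2 e) + shv (0,2,0,0) (E2 e)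
      + (e:ℂ) • shv (1,0,0,1) (E2 e) - (e:ℂ) • shv (0,1,0,1) (E2 e) := by
  funext a b c m
  simp only [S4, E2, shv, Pi.add_apply, Pi.sub_apply, Pi.smul_apply, smul_eq_mul, sub_zero,
    sub_eq_zero]
  split_ifs <;> first | ring | (exfalso; omega)

lemma combo1 (e : ℤ) (G : D) :
    gop e vz2 vw (gop e vz2 vw G) + (2:ℂ) • gop e vz2 vw (gop e vw vz1 G)
      + gop e vw vz1 (gop e vw vz1 G) - (e:ℂ) • shv vh (gop e vz2 vw G)
      - (e:ℂ) • shv vh (gop e vw vz1 G)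
    = shv (0,2,0,0) G - (2:ℂ) • shv (1,1,0,0) G + shv (2,0,0,0) G
      + (e:ℂ) • shv (0,1,0,1) G - (e:ℂ) • shv (1,0,0,1) G := by
  funext a b c m
  simp only [gop, shv, Pi.add_apply, Pi.sub_apply, Pi.smul_apply, smul_eq_mul, vz1, vz2, vw, vh,
    sub_zero, show ∀ x : ℤ, x - 1 - 1 = x - 2 from fun x => by ring]
  ring

lemma combo2 (e : ℤ) (G : D) :
    gop e vz2 vw (gop e vz2 vw G) - (2:ℂ) • gop e vz2 vw (gop e vz1 vw G)
      + gop e vz1 vw (gop e vz1 vw G) - (e:ℂ) • shv vh (gop e vz2 vw G)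
      + (e:ℂ) • shv vh (gop e vz1 vw G)
    = shv (2,0,0,0) G - (2:ℂ) • shv (1,1,0,0) G + shv (0,2,0,0) G
      + (e:ℂ) • shv (1,0,0,1) G - (e:ℂ) • shv (0,1,0,1) G := by
  funext a b c m
  simp only [gop, shv, Pi.add_apply, Pi.sub_apply, Pi.smul_apply, smul_eq_mul, vz1, vz2, vw, vh,
    sub_zero, show ∀ x : ℤ, x - 1 - 1 = x - 2 from fun x => by ring]
  ring

lemma combo3 (e : ℤ) (G : D) :
    gop e vw vz1 (gop e vw vz1 G) - (2:ℂ) • gop e vw vz2 (gop e vw vz1 G)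
      + gop e vw vz2 (gop e vw vz2 G) + (e:ℂ) • shv vh (gop e vw vz1 G)
      - (e:ℂ) • shv vh (gop e vw vz2 G)
    = shv (0,2,0,0) G - (2:ℂ) • shv (1,1,0,0) G + shv (2,0,0,0) G
      + (e:ℂ) • shv (0,1,0,1) G - (e:ℂ) • shv (1,0,0,1) G := by
  funext a b c m
  simp only [gop, shv, Pi.add_apply, Pi.sub_apply, Pi.smul_apply, smul_eq_mul, vz1, vz2, vw, vh,
    sub_zero, show ∀ x : ℤ, x - 1 - 1 = x - 2 from fun x => by ring]
  ring

lemma combo4 (e : ℤ) (G : D) :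
    gop e vw vz2 (gop e vw vz2 G) + (2:ℂ) • gop e vw vz2 (gop e vz1 vw G)
      + gop e vz1 vw (gop e vz1 vw G) - (e:ℂ) • shv vh (gop e vw vz2 G)
      - (e:ℂ) • shv vh (gop e vz1 vw G)
    = shv (2,0,0,0) G - (2:ℂ) • shv (1,1,0,0) G + shv (0,2,0,0) G
      + (e:ℂ) • shv (1,0,0,1) G - (e:ℂ) • shv (0,1,0,1) G := by
  funext a b c m
  simp only [gop, shv, Pi.add_apply, Pi.sub_apply, Pi.smul_apply, smul_eq_mul, vz1, vz2, vw, vh,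
    sub_zero, show ∀ x : ℤ, x - 1 - 1 = x - 2 from fun x => by ring]
  ring

-- certificates
lemma okF_S1 (e : ℤ) : okF (-1) (-1) (S1 e) := by
  intro p q r t h
  simp only [S1] at h
  by_cases hp : p = 0
  · rw [if_pos hp] at h
    obtain ⟨x1, x2, x3⟩ := geomHalf_ne h
    omega
  · rw [if_neg hp] at h; exact absurd rfl h

lemma okF_S2 (e : ℤ) : okF (-1) (-1) (S2 e) := by
  intro p q r t h
  simp only [S2] at h
  by_cases hp : p = 0
  · rw [if_pos hp] at h
    obtain ⟨x1, x2, x3⟩ := geomHalf_ne h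
    omega
  · rw [if_neg hp] at h; exact absurd rfl h

lemma okG_E1 (e : ℤ) : okG 0 0 (E1 e) := by
  intro p q r t h
  simp only [E1] at h
  by_cases hq : q = 0
  · rw [if_pos hq] at h
    obtain ⟨x1, x2, x3⟩ := geomHalf_ne h
    omega
  · rw [if_neg hq] at h; exact absurd rfl h

lemma okG_E2 (e : ℤ) : okG 0 0 (E2 e) := by
  intro p q r t h
  simp only [E2] at h
  by_cases hq : q = 0
  · rw [if_pos hq] at h
    obtain ⟨x1, x2, x3⟩ := geomHalf_ne h
    omega
  · rw [if_neg hq] at h; exact absurd rfl h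

lemma okG_one4 : okG 0 0 one4 := by
  intro p q r t h
  simp only [one4] at h
  by_cases hc : p = 0 ∧ q = 0 ∧ r = 0 ∧ t = 0
  · omega
  · rw [if_neg hc] at h; exact absurd rfl h

lemma okF_one4 : okF 0 0 one4 := by
  intro p q r t h
  simp only [one4] at h
  by_cases hc : p = 0 ∧ q = 0 ∧ r = 0 ∧ t = 0
  · omega
  · rw [if_neg hc] at h; exact absurd rfl h


-- helper certificates with uniform bounds
lemma sE (e : ℤ) {X : D} (hX : okG 0 0 X) (v : V) (h1 : 0 ≤ v.2.2.2) (h2 : 0 ≤ v.2.1)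
    (h3 : v.2.1 ≤ 2) : okG (-2) 2 (shv v X) :=
  okG_mono (okG_shv v hX h1) (by omega) (by omega)

lemma T1 (e : ℤ) : conv4 (S1 e) (S3 e) =
    gop e vz2 vw (E1 e) + (2:ℂ) • one4 + gop e vw vz1 (S1 e)
      - (e:ℂ) • shv vh (E1 e) - (e:ℂ) • shv vh (S1 e) := by
  have hS1 : okF (-1) (-1) (S1 e) := okF_S1 e
  have hE1 : okG 0 0 (E1 e) := okG_E1 e
  have honeG : okG 0 0 one4 := okG_one4
  have hAE1 : okG 0 1 (gop e vz2 vw (E1 e)) :=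
    okG_gop e vz2 vw hE1 (by norm_num [vz2]) (by norm_num [vw]) (by norm_num [vz2])
      (by norm_num [vw]) (by norm_num) (by norm_num [vz2]) (by norm_num [vw]) (by norm_num)
  have hAAE1 : okG (-2) 2 (gop e vz2 vw (gop e vz2 vw (E1 e))) :=
    okG_gop e vz2 vw hAE1 (by norm_num [vz2]) (by norm_num [vw]) (by norm_num [vz2])
      (by norm_num [vw]) (by norm_num) (by norm_num [vz2]) (by norm_num [vw]) (by norm_num)
  have hAone : okG (-2) 2 (gop e vz2 vw one4) :=
    okG_gop e vz2 vw honeG (by norm_num [vz2]) (by norm_num [vw]) (by norm_num [vz2])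
      (by norm_num [vw]) (by norm_num) (by norm_num [vz2]) (by norm_num [vw]) (by norm_num)
  have hBone : okG (-2) 2 (gop e vw vz1 one4) :=
    okG_gop e vw vz1 honeG (by norm_num [vw]) (by norm_num [vz1]) (by norm_num [vw])
      (by norm_num [vz1]) (by norm_num) (by norm_num [vw]) (by norm_num [vz1]) (by norm_num)
  have hhAE1 : okG (-2) 2 (shv vh (gop e vz2 vw (E1 e))) :=
    okG_mono (okG_shv vh hAE1 (by norm_num [vh])) (by norm_num [vh]) (by norm_num [vh])
  have hhone : okG (-2) 2 (shv vh one4) :=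
    okG_mono (okG_shv vh honeG (by norm_num [vh])) (by norm_num [vh]) (by norm_num [vh])
  have hAAE1' : okG (-2) 2 (gop e vz2 vw (gop e vz2 vw (E1 e))) := hAAE1
  have hs3 : S3 e = gop e vz2 vw (gop e vz2 vw (E1 e)) + (2:ℂ) • gop e vz2 vw one4
      + gop e vw vz1 one4 - (e:ℂ) • shv vh (gop e vz2 vw (E1 e)) - (e:ℂ) • shv vh one4 := by
    rw [S3_eq, ← combo1 e (E1 e), relB e]
  rw [hs3]
  rw [conv4_sub_right hS1
      (okG_sub (okG_add (okG_add hAAE1' (okG_smul _ hAone)) hBone) (okG_smul _ hhAE1))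
      (okG_smul _ hhone),
    conv4_sub_right hS1 (okG_add (okG_add hAAE1' (okG_smul _ hAone)) hBone) (okG_smul _ hhAE1),
    conv4_add_right hS1 (okG_add hAAE1' (okG_smul _ hAone)) hBone,
    conv4_add_right hS1 hAAE1' (okG_smul _ hAone)]
  rw [conv4_smul_right, conv4_smul_right, conv4_smul_right,
    conv4_shv_right, conv4_shv_right]
  rw [conv4_gop_cross e vz2 vw hS1 hAE1 rfl rfl (by norm_num [vz2]) (by norm_num [vw]),
    conv4_gop_cross e vz2 vw hS1 honeG rfl rfl (by norm_num [vz2]) (by norm_num [vw]),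
    conv4_gop_cross e vz2 vw hS1 hE1 rfl rfl (by norm_num [vz2]) (by norm_num [vw]),
    conv4_gop_right e vw vz1 hS1 honeG (by norm_num [vw]) (by norm_num [vz1]),
    relA e, conv4_one_left, conv4_one_left, conv4_one_left, conv4_one_right]


lemma T2 (e : ℤ) : conv4 (S1 e) (S4 e) =
    gop e vz2 vw (E2 e) - (2:ℂ) • one4 + gop e vz1 vw (S1 e)
      - (e:ℂ) • shv vh (E2 e) + (e:ℂ) • shv vh (S1 e) := by
  have hS1 : okF (-1) (-1) (S1 e) := okF_S1 e
  have hE2 : okG 0 0 (E2 e) := okG_E2 e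
  have honeG : okG 0 0 one4 := okG_one4
  have hAE2 : okG 0 1 (gop e vz2 vw (E2 e)) :=
    okG_gop e vz2 vw hE2 (by norm_num [vz2]) (by norm_num [vw]) (by norm_num [vz2])
      (by norm_num [vw]) (by norm_num) (by norm_num [vz2]) (by norm_num [vw]) (by norm_num)
  have hAAE2 : okG (-2) 2 (gop e vz2 vw (gop e vz2 vw (E2 e))) :=
    okG_gop e vz2 vw hAE2 (by norm_num [vz2]) (by norm_num [vw]) (by norm_num [vz2])
      (by norm_num [vw]) (by norm_num) (by norm_num [vz2]) (by norm_num [vw]) (by norm_num)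
  have hAone : okG (-2) 2 (gop e vz2 vw one4) :=
    okG_gop e vz2 vw honeG (by norm_num [vz2]) (by norm_num [vw]) (by norm_num [vz2])
      (by norm_num [vw]) (by norm_num) (by norm_num [vz2]) (by norm_num [vw]) (by norm_num)
  have hB'one : okG (-2) 2 (gop e vz1 vw one4) :=
    okG_gop e vz1 vw honeG (by norm_num [vz1]) (by norm_num [vw]) (by norm_num [vz1])
      (by norm_num [vw]) (by norm_num) (by norm_num [vz1]) (by norm_num [vw]) (by norm_num)
  have hhAE2 : okG (-2) 2 (shv vh (gop e vz2 vw (E2 e))) :=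
    okG_mono (okG_shv vh hAE2 (by norm_num [vh])) (by norm_num [vh]) (by norm_num [vh])
  have hhone : okG (-2) 2 (shv vh one4) :=
    okG_mono (okG_shv vh honeG (by norm_num [vh])) (by norm_num [vh]) (by norm_num [vh])
  have hs4 : S4 e = gop e vz2 vw (gop e vz2 vw (E2 e)) - (2:ℂ) • gop e vz2 vw one4
      + gop e vz1 vw one4 - (e:ℂ) • shv vh (gop e vz2 vw (E2 e)) + (e:ℂ) • shv vh one4 := by
    rw [S4_eq, ← combo2 e (E2 e), relB' e]
  rw [hs4]
  rw [conv4_add_right hS1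
      (okG_sub (okG_add (okG_sub hAAE2 (okG_smul _ hAone)) hB'one) (okG_smul _ hhAE2))
      (okG_smul _ hhone),
    conv4_sub_right hS1 (okG_add (okG_sub hAAE2 (okG_smul _ hAone)) hB'one) (okG_smul _ hhAE2),
    conv4_add_right hS1 (okG_sub hAAE2 (okG_smul _ hAone)) hB'one,
    conv4_sub_right hS1 hAAE2 (okG_smul _ hAone)]
  rw [conv4_smul_right, conv4_smul_right, conv4_smul_right,
    conv4_shv_right, conv4_shv_right]
  rw [conv4_gop_cross e vz2 vw hS1 hAE2 rfl rfl (by norm_num [vz2]) (by norm_num [vw]),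
    conv4_gop_cross e vz2 vw hS1 honeG rfl rfl (by norm_num [vz2]) (by norm_num [vw]),
    conv4_gop_cross e vz2 vw hS1 hE2 rfl rfl (by norm_num [vz2]) (by norm_num [vw]),
    conv4_gop_right e vz1 vw hS1 honeG (by norm_num [vz1]) (by norm_num [vw]),
    relA e, conv4_one_left, conv4_one_left, conv4_one_left, conv4_one_right]

lemma T3 (e : ℤ) : conv4 (S2 e) (S3 e) =
    gop e vw vz1 (S2 e) - (2:ℂ) • one4 + gop e vw vz2 (E1 e)
      + (e:ℂ) • shv vh (S2 e) - (e:ℂ) • shv vh (E1 e) := by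
  have hS2 : okF (-1) (-1) (S2 e) := okF_S2 e
  have hE1 : okG 0 0 (E1 e) := okG_E1 e
  have honeG : okG 0 0 one4 := okG_one4
  have hA'E1 : okG 0 1 (gop e vw vz2 (E1 e)) :=
    okG_gop e vw vz2 hE1 (by norm_num [vw]) (by norm_num [vz2]) (by norm_num [vw])
      (by norm_num [vz2]) (by norm_num) (by norm_num [vw]) (by norm_num [vz2]) (by norm_num)
  have hA'A'E1 : okG (-2) 2 (gop e vw vz2 (gop e vw vz2 (E1 e))) :=
    okG_gop e vw vz2 hA'E1 (by norm_num [vw]) (by norm_num [vz2]) (by norm_num [vw])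
      (by norm_num [vz2]) (by norm_num) (by norm_num [vw]) (by norm_num [vz2]) (by norm_num)
  have hA'one : okG (-2) 2 (gop e vw vz2 one4) :=
    okG_gop e vw vz2 honeG (by norm_num [vw]) (by norm_num [vz2]) (by norm_num [vw])
      (by norm_num [vz2]) (by norm_num) (by norm_num [vw]) (by norm_num [vz2]) (by norm_num)
  have hBone : okG (-2) 2 (gop e vw vz1 one4) :=
    okG_gop e vw vz1 honeG (by norm_num [vw]) (by norm_num [vz1]) (by norm_num [vw])
      (by norm_num [vz1]) (by norm_num) (by norm_num [vw]) (by norm_num [vz1]) (by norm_num)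
  have hhA'E1 : okG (-2) 2 (shv vh (gop e vw vz2 (E1 e))) :=
    okG_mono (okG_shv vh hA'E1 (by norm_num [vh])) (by norm_num [vh]) (by norm_num [vh])
  have hhone : okG (-2) 2 (shv vh one4) :=
    okG_mono (okG_shv vh honeG (by norm_num [vh])) (by norm_num [vh]) (by norm_num [vh])
  have hs3 : S3 e = gop e vw vz1 one4 - (2:ℂ) • gop e vw vz2 one4
      + gop e vw vz2 (gop e vw vz2 (E1 e)) + (e:ℂ) • shv vh one4
      - (e:ℂ) • shv vh (gop e vw vz2 (E1 e)) := by
    rw [S3_eq, ← combo3 e (E1 e), relB e]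
  rw [hs3]
  rw [conv4_sub_right hS2
      (okG_add (okG_add (okG_sub hBone (okG_smul _ hA'one)) hA'A'E1) (okG_smul _ hhone))
      (okG_smul _ hhA'E1),
    conv4_add_right hS2 (okG_add (okG_sub hBone (okG_smul _ hA'one)) hA'A'E1) (okG_smul _ hhone),
    conv4_add_right hS2 (okG_sub hBone (okG_smul _ hA'one)) hA'A'E1,
    conv4_sub_right hS2 hBone (okG_smul _ hA'one)]
  rw [conv4_smul_right, conv4_smul_right, conv4_smul_right,
    conv4_shv_right, conv4_shv_right]
  rw [conv4_gop_cross e vw vz2 hS2 hA'E1 rfl rfl (by norm_num [vw]) (by norm_num [vz2]),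
    conv4_gop_cross e vw vz2 hS2 honeG rfl rfl (by norm_num [vw]) (by norm_num [vz2]),
    conv4_gop_cross e vw vz2 hS2 hE1 rfl rfl (by norm_num [vw]) (by norm_num [vz2]),
    conv4_gop_right e vw vz1 hS2 honeG (by norm_num [vw]) (by norm_num [vz1]),
    relA' e, conv4_one_left, conv4_one_left, conv4_one_left, conv4_one_right]

lemma T4 (e : ℤ) : conv4 (S2 e) (S4 e) =
    gop e vw vz2 (E2 e) + (2:ℂ) • one4 + gop e vz1 vw (S2 e)
      - (e:ℂ) • shv vh (E2 e) - (e:ℂ) • shv vh (S2 e) := by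
  have hS2 : okF (-1) (-1) (S2 e) := okF_S2 e
  have hE2 : okG 0 0 (E2 e) := okG_E2 e
  have honeG : okG 0 0 one4 := okG_one4
  have hA'E2 : okG 0 1 (gop e vw vz2 (E2 e)) :=
    okG_gop e vw vz2 hE2 (by norm_num [vw]) (by norm_num [vz2]) (by norm_num [vw])
      (by norm_num [vz2]) (by norm_num) (by norm_num [vw]) (by norm_num [vz2]) (by norm_num)
  have hA'A'E2 : okG (-2) 2 (gop e vw vz2 (gop e vw vz2 (E2 e))) :=
    okG_gop e vw vz2 hA'E2 (by norm_num [vw]) (by norm_num [vz2]) (by norm_num [vw])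
      (by norm_num [vz2]) (by norm_num) (by norm_num [vw]) (by norm_num [vz2]) (by norm_num)
  have hA'one : okG (-2) 2 (gop e vw vz2 one4) :=
    okG_gop e vw vz2 honeG (by norm_num [vw]) (by norm_num [vz2]) (by norm_num [vw])
      (by norm_num [vz2]) (by norm_num) (by norm_num [vw]) (by norm_num [vz2]) (by norm_num)
  have hB'one : okG (-2) 2 (gop e vz1 vw one4) :=
    okG_gop e vz1 vw honeG (by norm_num [vz1]) (by norm_num [vw]) (by norm_num [vz1])
      (by norm_num [vw]) (by norm_num) (by norm_num [vz1]) (by norm_num [vw]) (by norm_num)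
  have hhA'E2 : okG (-2) 2 (shv vh (gop e vw vz2 (E2 e))) :=
    okG_mono (okG_shv vh hA'E2 (by norm_num [vh])) (by norm_num [vh]) (by norm_num [vh])
  have hhone : okG (-2) 2 (shv vh one4) :=
    okG_mono (okG_shv vh honeG (by norm_num [vh])) (by norm_num [vh]) (by norm_num [vh])
  have hs4 : S4 e = gop e vw vz2 (gop e vw vz2 (E2 e)) + (2:ℂ) • gop e vw vz2 one4
      + gop e vz1 vw one4 - (e:ℂ) • shv vh (gop e vw vz2 (E2 e))
      - (e:ℂ) • shv vh one4 := by
    rw [S4_eq, ← combo4 e (E2 e), relB' e]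
  rw [hs4]
  rw [conv4_sub_right hS2
      (okG_sub (okG_add (okG_add hA'A'E2 (okG_smul _ hA'one)) hB'one) (okG_smul _ hhA'E2))
      (okG_smul _ hhone),
    conv4_sub_right hS2 (okG_add (okG_add hA'A'E2 (okG_smul _ hA'one)) hB'one)
      (okG_smul _ hhA'E2),
    conv4_add_right hS2 (okG_add hA'A'E2 (okG_smul _ hA'one)) hB'one,
    conv4_add_right hS2 hA'A'E2 (okG_smul _ hA'one)]
  rw [conv4_smul_right, conv4_smul_right, conv4_smul_right,
    conv4_shv_right, conv4_shv_right]
  rw [conv4_gop_cross e vw vz2 hS2 hA'E2 rfl rfl (by norm_num [vw]) (by norm_num [vz2]),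
    conv4_gop_cross e vw vz2 hS2 honeG rfl rfl (by norm_num [vw]) (by norm_num [vz2]),
    conv4_gop_cross e vw vz2 hS2 hE2 rfl rfl (by norm_num [vw]) (by norm_num [vz2]),
    conv4_gop_right e vz1 vw hS2 honeG (by norm_num [vz1]) (by norm_num [vw]),
    relA' e, conv4_one_left, conv4_one_left, conv4_one_left, conv4_one_right]


lemma okG_S3 (e : ℤ) : okG (-2) 2 (S3 e) := by
  rw [S3_eq]
  refine okG_sub (okG_add (okG_add (okG_sub ?_ (okG_smul _ ?_)) ?_) (okG_smul _ ?_))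
    (okG_smul _ ?_) <;>
    exact sE e (okG_E1 e) _ (by norm_num) (by norm_num) (by norm_num)

lemma okG_S4 (e : ℤ) : okG (-2) 2 (S4 e) := by
  rw [S4_eq]
  refine okG_sub (okG_add (okG_add (okG_sub ?_ (okG_smul _ ?_)) ?_) (okG_smul _ ?_))
    (okG_smul _ ?_) <;>
    exact sE e (okG_E2 e) _ (by norm_num) (by norm_num) (by norm_num)

lemma mainEq (e : ℤ) : fDist e = (e:ℂ) • shv vh (S1 e + S2 e - E1 e - E2 e) := by
  have hS1 : okF (-1) (-1) (S1 e) := okF_S1 e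
  have hS2 : okF (-1) (-1) (S2 e) := okF_S2 e
  have hG3 := okG_S3 e
  have hG4 := okG_S4 e
  unfold fDist
  rw [show (fun a b c m => S1 e a b c m + S2 e a b c m) = S1 e + S2 e from rfl]
  rw [show (fun a b c m => S3 e a b c m + S4 e a b c m) = S3 e + S4 e from rfl]
  rw [conv4_add_left hS1 hS2 (okG_add hG3 hG4),
    conv4_add_right hS1 hG3 hG4, conv4_add_right hS2 hG3 hG4,
    T1 e, T2 e, T3 e, T4 e]
  funext a b c m
  simp only [gop, shv, one4, Pi.add_apply, Pi.sub_apply, Pi.smul_apply, smul_eq_mul,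
    vz1, vz2, vw, vh, sub_zero]
  ring

end St14



/-- `f(z₁,z₂,w) + f(z₂,z₁,w) = 0` as formal series (coefficientwise;
swapping `z₁ ↔ z₂` swaps the exponents `a ↔ b`). -/
theorem stmt14 (e : ℤ) (he : e = 1 ∨ e = -1) :
    ∀ a b c m : ℤ, fDist e a b c m + fDist e b a c m = 0 := by
  intro a b c m
  have h1 := congrFun (congrFun (congrFun (congrFun (St14.mainEq e) a) b) c) m
  have h2 := congrFun (congrFun (congrFun (congrFun (St14.mainEq e) b) a) c) m
  rw [h1, h2]
  simp only [St14.shv, St14.vh, Pi.add_apply, Pi.sub_apply, Pi.smul_apply, smul_eq_mul, sub_zero]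
  have r1 : S1 e b a c (m - 1) = St14.E2 e a b c (m - 1) := rfl
  have r2 : S2 e b a c (m - 1) = St14.E1 e a b c (m - 1) := rfl
  have r3 : St14.E1 e b a c (m - 1) = S2 e a b c (m - 1) := rfl
  have r4 : St14.E2 e b a c (m - 1) = S1 e a b c (m - 1) := rfl
  rw [r1, r2, r3, r4]
  ring
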